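/- Let U = {(x,y,p,q) ∈ ℝ⁴ : q > 0}. Then the smooth function F : U → ℝ defined by F(x,y,p,q) = q^{3/2} satisfies both the Wuenschmann condition A = F_y + D(K) − (2/3) F_q K ≡ 0 and the Cartan condition G = D(D(F_{qq})) − D(F_{qp}) + F_{qy} ≡ 0 on U, where D = ∂_x + p ∂_y + q ∂_p + F ∂_q and K = (1/6) D(F_q) − (1/9) F_q² − (1/2) F_p. -/

import Mathlib

noncomputable section

/-- Points of the second jet space: coordinates `(x, y, p, q)`. -/
abbrev V4 : Type := ℝ × ℝ × ℝ × ℝ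

/-- Directional (partial) derivative of `f` at `m` in the constant direction `v`. -/
def pd (v : V4) (f : V4 → ℝ) (m : V4) : ℝ := fderiv ℝ f m v

def ex : V4 := (1, 0, 0, 0)
def ey : V4 := (0, 1, 0, 0)
def ep : V4 := (0, 0, 1, 0)
def eq' : V4 := (0, 0, 0, 1)

/-- The total derivative operator `(Dh)(m) = h_x + p h_y + q h_p + F h_q`. -/
def Dtot (F : V4 → ℝ) (h : V4 → ℝ) (m : V4) : ℝ :=
  pd ex h m + m.2.2.1 * pd ey h m + m.2.2.2 * pd ep h m + F m * pd eq' h m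

/-- `K = (1/6) D(F_q) − (1/9) F_q² − (1/2) F_p`. -/
def Kf (F : V4 → ℝ) (m : V4) : ℝ :=
  (1/6) * Dtot F (pd eq' F) m - (1/9) * (pd eq' F m)^2 - (1/2) * pd ep F m

/-- The Wuenschmann expression `A = F_y + D(K) − (2/3) F_q K`. -/
def Wu (F : V4 → ℝ) (m : V4) : ℝ :=
  pd ey F m + Dtot F (Kf F) m - (2/3) * pd eq' F m * Kf F m

/-- The Cartan expression `G = D(D(F_{qq})) − D(F_{qp}) + F_{qy}`. -/
def CartanG (F : V4 → ℝ) (m : V4) : ℝ :=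
  Dtot F (Dtot F (pd eq' (pd eq' F))) m - Dtot F (pd ep (pd eq' F)) m +
    pd ey (pd eq' F) m

/-! ### Auxiliary lemmas -/

/-- The projection `(x,y,p,q) ↦ q` as a continuous linear map. -/
def L4 : V4 →L[ℝ] ℝ :=
  (ContinuousLinearMap.snd ℝ ℝ ℝ).comp ((ContinuousLinearMap.snd ℝ ℝ (ℝ × ℝ)).comp
    (ContinuousLinearMap.snd ℝ ℝ (ℝ × ℝ × ℝ)))

lemma hasFDerivAt_q (m : V4) : HasFDerivAt (fun m : V4 => m.2.2.2) L4 m := L4.hasFDerivAt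

lemma hasFDerivAt_rpow (r : ℝ) (m : V4) (hm : m.2.2.2 ≠ 0) :
    HasFDerivAt (fun m : V4 => m.2.2.2 ^ r) ((r * m.2.2.2 ^ (r-1)) • L4) m :=
  by have h1 := (Real.hasDerivAt_rpow_const (p := r) (Or.inl hm)).comp_hasFDerivAt m (hasFDerivAt_q m); exact h1

lemma pd_rpow (r : ℝ) (v m : V4) (hm : m.2.2.2 ≠ 0) :
    pd v (fun m : V4 => m.2.2.2 ^ r) m = r * m.2.2.2 ^ (r-1) * v.2.2.2 := by
  simp [pd, (hasFDerivAt_rpow r m hm).fderiv, L4, mul_assoc]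

lemma pd_cmul_rpow (c r : ℝ) (v m : V4) (hm : m.2.2.2 ≠ 0) :
    pd v (fun m : V4 => c * m.2.2.2 ^ r) m = c * (r * m.2.2.2 ^ (r-1) * v.2.2.2) := by
  have h := ((hasFDerivAt_rpow r m hm).const_mul c).fderiv
  simp [pd, h, L4, mul_assoc]

lemma pd_cmul_q (c : ℝ) (v m : V4) :
    pd v (fun m : V4 => c * m.2.2.2) m = c * v.2.2.2 := by
  have h := ((hasFDerivAt_q m).const_mul c).fderiv
  simp [pd, h, L4]

lemma pd_const (c : ℝ) (v m : V4) : pd v (fun _ : V4 => c) m = 0 := by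
  simp [pd]

/-- Derivatives only depend on local behaviour: functions agreeing on the open set
`{q > 0}` have the same partial derivatives there. -/
lemma pd_congr_on {f g : V4 → ℝ} (h : ∀ m' : V4, 0 < m'.2.2.2 → f m' = g m')
    (v : V4) {m : V4} (hm : 0 < m.2.2.2) : pd v f m = pd v g m := by
  unfold pd
  have hopen : IsOpen {m' : V4 | 0 < m'.2.2.2} :=
    isOpen_lt continuous_const L4.continuous
  have hmem : {m' : V4 | 0 < m'.2.2.2} ∈ nhds m := hopen.mem_nhds hm
  rw [Filter.EventuallyEq.fderiv_eq (Filter.eventuallyEq_of_mem hmem h)]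

/-- `F = q^{3/2}`. -/
def FF : V4 → ℝ := fun m => m.2.2.2 ^ ((3:ℝ)/2)

lemma hFQ : ∀ m' : V4, 0 < m'.2.2.2 → pd eq' FF m' = (3/2) * m'.2.2.2 ^ ((1:ℝ)/2) := by
  intro m' h
  rw [show FF = fun m : V4 => m.2.2.2 ^ ((3:ℝ)/2) from rfl, pd_rpow _ _ _ h.ne']
  norm_num [eq']

lemma hFP : ∀ m' : V4, 0 < m'.2.2.2 → pd ep FF m' = 0 := by
  intro m' h
  rw [show FF = fun m : V4 => m.2.2.2 ^ ((3:ℝ)/2) from rfl, pd_rpow _ _ _ h.ne']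
  norm_num [ep]

lemma hFY : ∀ m' : V4, 0 < m'.2.2.2 → pd ey FF m' = 0 := by
  intro m' h
  rw [show FF = fun m : V4 => m.2.2.2 ^ ((3:ℝ)/2) from rfl, pd_rpow _ _ _ h.ne']
  norm_num [ey]

-- derivatives of F_q = (3/2) q^{1/2}
lemma hpdFQ (v : V4) : ∀ m' : V4, 0 < m'.2.2.2 →
    pd v (pd eq' FF) m' = (3/2) * ((1/2) * m'.2.2.2 ^ (-(1:ℝ)/2) * v.2.2.2) := by
  intro m' h
  rw [pd_congr_on hFQ v h, pd_cmul_rpow _ _ _ _ h.ne']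
  norm_num

lemma hDFQ : ∀ m' : V4, 0 < m'.2.2.2 → Dtot FF (pd eq' FF) m' = (3/4) * m'.2.2.2 := by
  intro m' h
  have hq := h.ne'
  rw [Dtot, hpdFQ ex m' h, hpdFQ ey m' h, hpdFQ ep m' h, hpdFQ eq' m' h]
  simp only [ex, ey, ep, eq', FF]
  norm_num
  have hh : m'.2.2.2 ^ ((3:ℝ)/2) * m'.2.2.2 ^ (-((1:ℝ)/2)) = m'.2.2.2 := by
    rw [← Real.rpow_add h]; norm_num
  linear_combination (3/4) * hh

lemma hK : ∀ m' : V4, 0 < m'.2.2.2 → Kf FF m' = -(1/8) * m'.2.2.2 := by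
  intro m' h
  rw [Kf, hDFQ m' h, hFQ m' h, hFP m' h]
  have : ((3:ℝ)/2 * m'.2.2.2 ^ ((1:ℝ)/2))^2 = (9/4) * m'.2.2.2 := by
    rw [mul_pow, ← Real.rpow_natCast (m'.2.2.2 ^ ((1:ℝ)/2)) 2, ← Real.rpow_mul h.le]
    norm_num [Real.rpow_one]
  rw [this]; ring

lemma hDK (v : V4) : ∀ m' : V4, 0 < m'.2.2.2 →
    pd v (Kf FF) m' = -(1/8) * v.2.2.2 := by
  intro m' h
  rw [pd_congr_on hK v h, pd_cmul_q]

lemma hWu : ∀ m : V4, 0 < m.2.2.2 → Wu FF m = 0 := by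
  intro m h
  rw [Wu, Dtot, hDK ex m h, hDK ey m h, hDK ep m h, hDK eq' m h,
    hFY m h, hFQ m h, hK m h]
  simp only [ex, ey, ep, eq', FF]
  norm_num
  rw [show ((3:ℝ)/2) = 1/2 + 1 by norm_num, Real.rpow_add h, Real.rpow_one]
  ring

lemma hFQQ : ∀ m' : V4, 0 < m'.2.2.2 →
    pd eq' (pd eq' FF) m' = (3/4) * m'.2.2.2 ^ (-((1:ℝ)/2)) := by
  intro m' h
  rw [hpdFQ eq' m' h]
  simp only [eq']
  norm_num
  ring

lemma hpdFQQ (v : V4) : ∀ m' : V4, 0 < m'.2.2.2 →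
    pd v (pd eq' (pd eq' FF)) m' = (3/4) * (-((1:ℝ)/2) * m'.2.2.2 ^ (-((3:ℝ)/2)) * v.2.2.2) := by
  intro m' h
  rw [pd_congr_on hFQQ v h, pd_cmul_rpow _ _ _ _ h.ne']
  norm_num

lemma hDQQ : ∀ m' : V4, 0 < m'.2.2.2 →
    Dtot FF (pd eq' (pd eq' FF)) m' = -(3/8) := by
  intro m' h
  rw [Dtot, hpdFQQ ex m' h, hpdFQQ ey m' h, hpdFQQ ep m' h, hpdFQQ eq' m' h]
  simp only [ex, ey, ep, eq', FF]
  norm_num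
  have hh : m'.2.2.2 ^ ((3:ℝ)/2) * m'.2.2.2 ^ (-((3:ℝ)/2)) = 1 := by
    rw [← Real.rpow_add h]; norm_num
  linear_combination (3/8) * hh

lemma hFQP : ∀ m' : V4, 0 < m'.2.2.2 → pd ep (pd eq' FF) m' = 0 := by
  intro m' h
  rw [hpdFQ ep m' h]
  simp [ep]

lemma hCartan : ∀ m : V4, 0 < m.2.2.2 → CartanG FF m = 0 := by
  intro m h
  have t1 : ∀ v : V4, pd v (Dtot FF (pd eq' (pd eq' FF))) m = 0 := fun v => by
    rw [pd_congr_on hDQQ v h, pd_const]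
  have t2 : ∀ v : V4, pd v (pd ep (pd eq' FF)) m = 0 := fun v => by
    rw [pd_congr_on hFQP v h, pd_const]
  have t3 : pd ey (pd eq' FF) m = 0 := by
    rw [hpdFQ ey m h]; simp [ey]
  rw [CartanG, Dtot, Dtot, t1, t1, t1, t1, t2, t2, t2, t2, t3]
  ring

/-- The function `F = q^{3/2}` satisfies both the Wuenschmann condition `A ≡ 0` and the
Cartan condition `G ≡ 0` on `U = {q > 0}`. -/
theorem q_three_halves_einstein_weyl :
    ∀ m ∈ {m : V4 | m.2.2.2 > 0},
      Wu (fun m : V4 => m.2.2.2 ^ ((3:ℝ)/2)) m = 0 ∧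
      CartanG (fun m : V4 => m.2.2.2 ^ ((3:ℝ)/2)) m = 0 := by
  intro m hm
  exact ⟨hWu m hm, hCartan m hm⟩
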